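/- Assume λ₁ ≠ 0. Then x_n + z_n > 0 for all n ≥ 0 in the symmetric 2q-state broadcast model. (Equivalently: if x_n + z_n = 0 for some n, then λ₁ = 0.) -/

import Mathlib

/-- Posterior probability of root state `i` given leaf configuration `A`. -/
noncomputable def posterior {n : ℕ} {S : Type*} [Fintype S]
    (p : Fin n → S → ℝ) (i : Fin n) (A : S) : ℝ :=
  p i A / ∑ j, p j A

lemma matrix_pow_diff (q : ℕ) (hq : 2 ≤ q) (p₀ p₁ p₂ : ℝ) (n : ℕ) :
    ∀ k : Fin (2 * q),
      ((Matrix.of (fun i j : Fin (2 * q) =>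
          if i = j then p₀
          else if (((i : ℕ) < q) ↔ ((j : ℕ) < q)) then p₁ else p₂)) ^ n) ⟨0, by have := hq; omega⟩ k
      - ((Matrix.of (fun i j : Fin (2 * q) =>
          if i = j then p₀
          else if (((i : ℕ) < q) ↔ ((j : ℕ) < q)) then p₁ else p₂)) ^ n) ⟨1, by omega⟩ k
      = (p₀ - p₁) ^ n *
        ((if k = ⟨0, by have := hq; omega⟩ then 1 else 0) - (if k = ⟨1, by omega⟩ then (1:ℝ) else 0)) := by
  set M := (Matrix.of (fun i j : Fin (2 * q) =>
          if i = j then p₀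
          else if (((i : ℕ) < q) ↔ ((j : ℕ) < q)) then p₁ else p₂)) with hM
  have hq0 : 0 < q := by omega
  have hq1 : 1 < q := by omega
  have h01 : (⟨0, by have := hq; omega⟩ : Fin (2*q)) ≠ ⟨1, by omega⟩ := by
    intro h; exact absurd (congrArg Fin.val h) (by norm_num)
  have hbase : ∀ k : Fin (2*q), M ⟨0, by have := hq; omega⟩ k - M ⟨1, by omega⟩ k
      = (p₀ - p₁) *
        ((if k = ⟨0, by have := hq; omega⟩ then 1 else 0) - (if k = ⟨1, by omega⟩ then (1:ℝ) else 0)) := by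
    intro k
    simp only [hM, Matrix.of_apply]
    rcases eq_or_ne k ⟨0, by have := hq; omega⟩ with hk0 | hk0
    · subst hk0
      simp [h01, h01.symm, hq0, hq1]
    rcases eq_or_ne k ⟨1, by omega⟩ with hk1 | hk1
    · subst hk1
      simp [h01, h01.symm, hq0, hq1]
    · simp [Ne.symm hk0, Ne.symm hk1, hk0, hk1, hq0, hq1]
  induction n with
  | zero =>
    intro k
    simp only [pow_zero, Matrix.one_apply]
    rcases eq_or_ne k ⟨0, by have := hq; omega⟩ with hk0 | hk0
    · subst hk0; simp [h01.symm, h01, Eq.comm]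
    rcases eq_or_ne k ⟨1, by omega⟩ with hk1 | hk1
    · subst hk1; simp [h01, hk0, Ne.symm hk0]
    · simp [Ne.symm hk0, Ne.symm hk1, hk0, hk1]
  | succ m ih =>
    intro k
    rw [pow_succ, Matrix.mul_apply, Matrix.mul_apply, ← Finset.sum_sub_distrib]
    have step : ∀ m' ∈ Finset.univ, (M ^ m) ⟨0, by have := hq; omega⟩ m' * M m' k - (M ^ m) ⟨1, by omega⟩ m' * M m' k
        = ((p₀ - p₁) ^ m *
          ((if m' = (⟨0, by have := hq; omega⟩ : Fin (2*q)) then 1 else 0)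
            - (if m' = (⟨1, by omega⟩ : Fin (2*q)) then (1:ℝ) else 0))) * M m' k := by
      intro m' _
      rw [← sub_mul, ih m']
    rw [Finset.sum_congr rfl step]
    have hsum : ∑ m' : Fin (2*q), ((p₀ - p₁) ^ m *
          ((if m' = (⟨0, by have := hq; omega⟩ : Fin (2*q)) then 1 else 0)
            - (if m' = (⟨1, by omega⟩ : Fin (2*q)) then (1:ℝ) else 0))) * M m' k
        = (p₀ - p₁) ^ m * (M ⟨0, by have := hq; omega⟩ k - M ⟨1, by omega⟩ k) := by
      have : ∀ m' : Fin (2*q), ((p₀ - p₁) ^ m *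
          ((if m' = (⟨0, by have := hq; omega⟩ : Fin (2*q)) then 1 else 0)
            - (if m' = (⟨1, by omega⟩ : Fin (2*q)) then (1:ℝ) else 0))) * M m' k
          = (p₀ - p₁) ^ m * ((if m' = (⟨0, by have := hq; omega⟩ : Fin (2*q)) then M ⟨0, by have := hq; omega⟩ k else 0)
            - (if m' = (⟨1, by omega⟩ : Fin (2*q)) then M ⟨1, by omega⟩ k else 0)) := by
        intro m'
        rcases eq_or_ne m' ⟨0, by have := hq; omega⟩ with h | h
        · subst h; simp [h01.symm]
        rcases eq_or_ne m' ⟨1, by omega⟩ with h1 | h1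
        · subst h1; simp [h01, h]
        · simp [h, h1]
      rw [Finset.sum_congr rfl (fun m' _ => this m')]
      rw [← Finset.mul_sum, Finset.sum_sub_distrib]
      simp
    rw [hsum, hbase k, pow_succ]
    ring


set_option maxHeartbeats 1000000 in
/-- If `λ₁ = p₀ - p₁ ≠ 0` then `x_n + z_n > 0` in the symmetric `2q`-state
broadcast model: here the model at level `n` is encoded by the joint mass
function `p` of (root, level-`n` configuration), with uniform root, symmetry
under all category-structure-preserving permutations of states, and a leaf map
`ℓ` whose conditional law given the root is the `n`-th matrix power `M^n` of the
structured transition matrix; `x_n = E[f_n(1,σ¹(n))] - 1/(2q)` and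
`z_n = E[f_n(q+1,σ¹(n))] - 1/(2q)`. -/
theorem stmt16 (q n : ℕ) (hq : 2 ≤ q) (p₀ p₁ p₂ : ℝ)
    (hp₀ : 0 ≤ p₀) (hp₁ : 0 ≤ p₁) (hp₂ : 0 ≤ p₂)
    (hsum : p₀ + ((q : ℝ) - 1) * p₁ + (q : ℝ) * p₂ = 1)
    (hlam : p₀ - p₁ ≠ 0)
    {S : Type*} [Fintype S]
    (p : Fin (2 * q) → S → ℝ) (x z : ℝ)
    (hp : ∀ i A, 0 ≤ p i A)
    (hroot : ∀ i, ∑ A, p i A = 1 / (2 * q))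
    (hsym : ∀ g : Equiv.Perm (Fin (2 * q)),
      (∀ i j : Fin (2 * q),
        ((((g i : ℕ) < q)) ↔ (((g j : ℕ) < q))) ↔ ((((i : ℕ) < q)) ↔ (((j : ℕ) < q)))) →
      ∃ e : S ≃ S, ∀ i A, p (g i) (e A) = p i A)
    (ℓ : S → Fin (2 * q))
    (hleaf : ∀ i k : Fin (2 * q),
      (2 * q : ℝ) * ∑ A ∈ Finset.univ.filter (fun A => ℓ A = k), p i A
        = ((Matrix.of (fun i j : Fin (2 * q) =>
            if i = j then p₀
            else if (((i : ℕ) < q) ↔ ((j : ℕ) < q)) then p₁ else p₂)) ^ n) i k)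
    (hx : x = (2 * q : ℝ) * (∑ A, p ⟨0, by omega⟩ A * posterior p ⟨0, by omega⟩ A)
      - 1 / (2 * q))
    (hz : z = (2 * q : ℝ) * (∑ A, p ⟨0, by omega⟩ A * posterior p ⟨q, by omega⟩ A)
      - 1 / (2 * q)) :
    0 < x + z := by
  classical
  have hq0 : 0 < q := by omega
  have hq1 : 1 < q := by omega
  have hqR : (1:ℝ) < (q:ℝ) := by exact_mod_cast hq1
  set i0 : Fin (2*q) := ⟨0, by omega⟩ with hi0
  set i1 : Fin (2*q) := ⟨1, by omega⟩ with hi1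
  set iq : Fin (2*q) := ⟨q, by omega⟩ with hiq
  have h01 : i0 ≠ i1 := by
    intro h; exact absurd (congrArg Fin.val h) (by norm_num)
  -- basic facts about the marginal s A = ∑ j, p j A
  have hs0 : ∀ A : S, 0 ≤ ∑ j, p j A := fun A => Finset.sum_nonneg (fun j _ => hp j A)
  have hpz : ∀ A : S, (∑ j, p j A) = 0 → ∀ i, p i A = 0 := by
    intro A h i
    exact (Finset.sum_eq_zero_iff_of_nonneg (fun j _ => hp j A)).mp h i (Finset.mem_univ i)
  have hpsf : ∀ (i : Fin (2*q)) (A : S), p i A = (∑ j, p j A) * posterior p i A := by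
    intro i A
    by_cases h : (∑ j, p j A) = 0
    · simp [posterior, h, hpz A h i]
    · rw [posterior, mul_div_cancel₀ _ h]
  -- symmetry transfer
  have transfer : ∀ g : Equiv.Perm (Fin (2*q)),
      (∀ i : Fin (2*q), ((g i : ℕ) < q ↔ (i:ℕ) < q)) →
      ∀ i j : Fin (2*q), (∑ A, p (g i) A * posterior p (g j) A)
        = ∑ A, p i A * posterior p j A := by
    intro g hg i j
    obtain ⟨e, he⟩ := hsym g (fun i j => by rw [hg i, hg j])
    have hse : ∀ A, (∑ k, p k (e A)) = ∑ k, p k A := by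
      intro A
      rw [← Equiv.sum_comp g (fun k => p k (e A))]
      simp [he]
    calc (∑ A, p (g i) A * posterior p (g j) A)
        = ∑ A, p (g i) (e A) * posterior p (g j) (e A) :=
          (Equiv.sum_comp e (fun A => p (g i) A * posterior p (g j) A)).symm
      _ = ∑ A, p i A * posterior p j A := by
          refine Finset.sum_congr rfl (fun A _ => ?_)
          simp only [posterior, hse, he]
  -- within-category swaps preserve categories pointwise
  have hswap : ∀ u v : Fin (2*q), ((u:ℕ) < q ↔ (v:ℕ) < q) →
      ∀ i : Fin (2*q), ((Equiv.swap u v i : ℕ) < q ↔ (i:ℕ) < q) := by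
    intro u v huv i
    rcases eq_or_ne i u with h | h
    · subst h; rw [Equiv.swap_apply_left]; exact huv.symm
    rcases eq_or_ne i v with h1 | h1
    · subst h1; rw [Equiv.swap_apply_right]; exact huv
    · rw [Equiv.swap_apply_of_ne_of_ne h h1]
  -- abbreviations
  set a00 : ℝ := ∑ A, p i0 A * posterior p i0 A with ha00
  set a01 : ℝ := ∑ A, p i0 A * posterior p i1 A with ha01
  set a0q : ℝ := ∑ A, p i0 A * posterior p iq A with ha0q
  set a11 : ℝ := ∑ A, p i1 A * posterior p i1 A with ha11
  -- key symmetry facts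
  have key1 : ∀ j : Fin (2*q), 0 < (j:ℕ) → (j:ℕ) < q →
      (∑ A, p i0 A * posterior p j A) = a01 := by
    intro j hj0 hjq
    have hcat : ((i1:ℕ) < q ↔ (j:ℕ) < q) := iff_of_true hq1 hjq
    have hg := hswap i1 j hcat
    have := transfer (Equiv.swap i1 j) hg i0 i1
    rwa [Equiv.swap_apply_of_ne_of_ne h01 (by intro h; rw [← h] at hj0; simp [hi0] at hj0),
      Equiv.swap_apply_left] at this
  have key2 : ∀ j : Fin (2*q), q ≤ (j:ℕ) →
      (∑ A, p i0 A * posterior p j A) = a0q := by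
    intro j hj
    have hcat : ((iq:ℕ) < q ↔ (j:ℕ) < q) := iff_of_false (by simp [hiq]) (by omega)
    have hg := hswap iq j hcat
    have := transfer (Equiv.swap iq j) hg i0 iq
    rwa [Equiv.swap_apply_of_ne_of_ne
        (by intro h; exact absurd (congrArg Fin.val h) (by simp [hi0, hiq]; omega))
        (by intro h; rw [← h] at hj; simp [hi0] at hj; omega),
      Equiv.swap_apply_left] at this
  have key3 : a11 = a00 := by
    have hcat : ((i0:ℕ) < q ↔ (i1:ℕ) < q) := iff_of_true hq0 hq1
    have hg := hswap i0 i1 hcat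
    have := transfer (Equiv.swap i0 i1) hg i0 i0
    rwa [Equiv.swap_apply_left] at this
  -- row sum identity
  have hrowA : ∀ A : S, (∑ j, p i0 A * posterior p j A) = p i0 A := by
    intro A
    rw [← Finset.mul_sum]
    simp only [posterior, ← Finset.sum_div]
    by_cases h : (∑ j, p j A) = 0
    · simp [hpz A h i0]
    · rw [div_self h, mul_one]
  have hrow : (∑ j : Fin (2*q), ∑ A, p i0 A * posterior p j A) = 1/(2*q) := by
    rw [Finset.sum_comm]
    rw [Finset.sum_congr rfl (fun A _ => hrowA A)]
    exact hroot i0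
  -- split the row sum
  have hsplit : a00 + ((q:ℝ) - 1) * a01 + (q:ℝ) * a0q = 1/(2*q) := by
    have hG : ∀ j : Fin (2*q), (∑ A, p i0 A * posterior p j A)
        = (if (j:ℕ) = 0 then a00 else if (j:ℕ) < q then a01 else a0q) := by
      intro j
      by_cases h0 : (j:ℕ) = 0
      · have hj : j = i0 := Fin.ext (by simp [hi0, h0])
        rw [hj, if_pos (show ((i0:ℕ) = 0) from rfl)]
      by_cases h1 : (j:ℕ) < q
      · rw [key1 j (by omega) h1, if_neg h0, if_pos h1]
      · rw [key2 j (by omega), if_neg h0, if_neg h1]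
    rw [Finset.sum_congr rfl (fun j _ => hG j)] at hrow
    rw [Fin.sum_univ_eq_sum_range
      (fun m => if m = 0 then a00 else if m < q then a01 else a0q) (2*q)] at hrow
    rw [Finset.range_eq_Ico,
      ← Finset.sum_Ico_consecutive _ (Nat.zero_le q) (by omega : q ≤ 2*q),
      ← Finset.range_eq_Ico] at hrow
    have e1 : (∑ m ∈ Finset.range q, (if m = 0 then a00 else if m < q then a01 else a0q))
        = (q:ℝ) * a01 + (a00 - a01) := by
      have step : ∀ m ∈ Finset.range q, (if m = 0 then a00 else if m < q then a01 else a0q)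
          = a01 + (if m = 0 then a00 - a01 else 0) := by
        intro m hm
        have hm' := Finset.mem_range.mp hm
        by_cases h : m = 0
        · rw [if_pos h, if_pos h]; ring
        · rw [if_neg h, if_pos hm', if_neg h]; ring
      rw [Finset.sum_congr rfl step, Finset.sum_add_distrib, Finset.sum_const,
        Finset.sum_ite_eq' (Finset.range q) 0 (fun _ => a00 - a01),
        if_pos (Finset.mem_range.mpr hq0), Finset.card_range, nsmul_eq_mul]
    have e2 : (∑ m ∈ Finset.Ico q (2*q), (if m = 0 then a00 else if m < q then a01 else a0q))
        = (q:ℝ) * a0q := by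
      have step : ∀ m ∈ Finset.Ico q (2*q),
          (if m = 0 then a00 else if m < q then a01 else a0q) = a0q := by
        intro m hm
        have hm' := Finset.mem_Ico.mp hm
        rw [if_neg (by omega), if_neg (by omega)]
      rw [Finset.sum_congr rfl step, Finset.sum_const, Nat.card_Ico]
      have hcard : 2*q - q = q := by omega
      rw [hcard, nsmul_eq_mul]
    rw [e1, e2] at hrow
    linarith [hrow]
  -- express x+z
  have hxz : x + z = 2*((q:ℝ)-1)*(a00 - a01) := by
    rw [hx, hz]
    linear_combination (2:ℝ) * hsplit
  -- sum of squares
  have hA : ∀ A : S, (∑ j, p j A) * (posterior p i0 A - posterior p i1 A)^2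
      = p i0 A * posterior p i0 A + p i1 A * posterior p i1 A
        - 2*(p i0 A * posterior p i1 A) := by
    intro A
    rw [hpsf i0 A, hpsf i1 A]
    ring
  have hT : (∑ A, (∑ j, p j A) * (posterior p i0 A - posterior p i1 A)^2)
      = 2*(a00 - a01) := by
    rw [Finset.sum_congr rfl (fun A _ => hA A)]
    rw [Finset.sum_sub_distrib, Finset.sum_add_distrib, ← Finset.mul_sum]
    rw [ha00, ha01, ha11] at *
    rw [key3]
    ring
  have hT0 : 0 ≤ ∑ A, (∑ j, p j A) * (posterior p i0 A - posterior p i1 A)^2 :=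
    Finset.sum_nonneg (fun A _ => mul_nonneg (hs0 A) (sq_nonneg _))
  -- main argument
  by_contra hcon
  push_neg at hcon
  have hge : 0 ≤ a00 - a01 := by linarith [hT0, hT]
  have hxz0 : x + z = 0 :=
    le_antisymm hcon (by rw [hxz]; exact mul_nonneg (by linarith) hge)
  have ha : a00 - a01 = 0 := by
    have h2 : 2*((q:ℝ)-1)*(a00 - a01) = 0 := by rw [← hxz]; exact hxz0
    have hpos : (0:ℝ) < 2*((q:ℝ)-1) := by linarith
    exact (mul_eq_zero.mp h2).resolve_left (ne_of_gt hpos)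
  have hTzero : (∑ A, (∑ j, p j A) * (posterior p i0 A - posterior p i1 A)^2) = 0 := by
    rw [hT, ha, mul_zero]
  have hterm : ∀ A : S, (∑ j, p j A) * (posterior p i0 A - posterior p i1 A)^2 = 0 := by
    intro A
    exact (Finset.sum_eq_zero_iff_of_nonneg
      (fun A _ => mul_nonneg (hs0 A) (sq_nonneg _))).mp hTzero A (Finset.mem_univ A)
  have hpeq : ∀ A : S, p i0 A = p i1 A := by
    intro A
    rcases mul_eq_zero.mp (hterm A) with h | h
    · rw [hpz A h i0, hpz A h i1]
    · have : posterior p i0 A = posterior p i1 A := by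
        have := sq_eq_zero_iff.mp h
        linarith
      rw [hpsf i0 A, hpsf i1 A, this]
  -- conclude via matrix powers
  have hMeq : ((Matrix.of (fun i j : Fin (2 * q) =>
        if i = j then p₀
        else if (((i : ℕ) < q) ↔ ((j : ℕ) < q)) then p₁ else p₂)) ^ n) i0 i0
      = ((Matrix.of (fun i j : Fin (2 * q) =>
        if i = j then p₀
        else if (((i : ℕ) < q) ↔ ((j : ℕ) < q)) then p₁ else p₂)) ^ n) i1 i0 := by
    rw [← hleaf i0 i0, ← hleaf i1 i0]
    congr 1
    exact Finset.sum_congr rfl (fun A _ => hpeq A)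
  have hdiff := matrix_pow_diff q hq p₀ p₁ p₂ n i0
  rw [hMeq, sub_self] at hdiff
  rw [if_pos rfl, if_neg h01] at hdiff
  have hpow : (p₀ - p₁)^n = 0 := by simpa using hdiff.symm
  rcases Nat.eq_zero_or_pos n with hn | hn
  · rw [hn, pow_zero] at hpow; norm_num at hpow
  · exact hlam (pow_eq_zero_iff (by omega)|>.mp hpow)
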